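/- The minimum average-case cost of a precedence-closed decision tree for the constructed instance (H, T, ≼_T) equals exactly twice the minimum of covT(C) over precedence-closed sequences C of distinct sets from S covering all of U. (This is the correctness of the reduction showing that approximating Precedence Constrained Average Case Decision Tree is as hard as approximating Precedence Constrained Min-Sum Set Cover with f = 1.) -/

import Mathlib

open Finset

universe u

inductive DTree (α : Type u) : Type u where
  | leaf : α → DTree α
  | node : Finset (Finset α) → (Finset α → DTree α) → DTree α

variable {α : Type*} [DecidableEq α]

noncomputable def DTree.cost : DTree α → α → ℕ
  | .leaf _, _ => 0
  | .node t c, h =>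
      if hR : ∃ R ∈ t, h ∈ R then 1 + (c hR.choose).cost h else 0

noncomputable def costW (H : Finset α) (D : DTree α) : ℕ := H.sup (fun h => D.cost h)

noncomputable def costA (H : Finset α) (D : DTree α) : ℕ := ∑ h ∈ H, D.cost h

def IsTest (H : Finset α) (t : Finset (Finset α)) : Prop :=
  (∀ R ∈ t, R.Nonempty) ∧ (∀ R ∈ t, ∀ R' ∈ t, R ≠ R' → Disjoint R R') ∧ t.sup id = H

def Separates (H : Finset α) (T : Finset (Finset (Finset α))) : Prop :=
  ∀ h₁ ∈ H, ∀ h₂ ∈ H, h₁ ≠ h₂ → ∃ t ∈ T, ∃ R ∈ t, h₁ ∈ R ∧ h₂ ∉ R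

def Valid (T : Finset (Finset (Finset α))) : Finset α → DTree α → Prop
  | Hv, .leaf h => Hv = {h}
  | Hv, .node t c => t ∈ T ∧ ∀ R ∈ t, (R ∩ Hv).Nonempty → Valid T (R ∩ Hv) (c R)

def PrecValid (T : Finset (Finset (Finset α)))
    (le : Finset (Finset α) → Finset (Finset α) → Prop) :
    Finset (Finset (Finset α)) → Finset α → DTree α → Prop
  | _, Hv, .leaf h => Hv = {h}
  | P, Hv, .node t c =>
      t ∈ T ∧ (∀ t' ∈ T, le t' t → t' ≠ t → t' ∈ P) ∧
      ∀ R ∈ t, (R ∩ Hv).Nonempty → PrecValid T le (insert t P) (R ∩ Hv) (c R)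

noncomputable def sumSizes : DTree α → Finset α → ℕ
  | .leaf _, _ => 0
  | .node t c, Hv =>
      Hv.card + ∑ R ∈ t.filter (fun R => (R ∩ Hv).Nonempty), sumSizes (c R) (R ∩ Hv)

noncomputable def nleaves : DTree α → Finset α → ℕ
  | .leaf _, _ => 1
  | .node t c, Hv => ∑ R ∈ t.filter (fun R => (R ∩ Hv).Nonempty), nleaves (c R) (R ∩ Hv)

def xiT (H : Finset α) (t : Finset (Finset α)) : Finset α :=
  H.filter (fun h => ∃ R ∈ t, h ∈ R ∧ 4 * R.card ≤ 3 * H.card)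

/-- The test associated to a set X in the reduction: singleton replies for the
hypotheses of elements of X, plus (if nonempty) one reply collecting all hypotheses
of elements outside X. -/
def tX {α : Type*} [DecidableEq α] (U X : Finset α) : Finset (Finset (α × Bool)) :=
  ((X ×ˢ (Finset.univ : Finset Bool)).image (fun p => ({p} : Finset (α × Bool)))) ∪
    (({(U \ X) ×ˢ (Finset.univ : Finset Bool)} : Finset (Finset (α × Bool))).filter
      (fun R => R.Nonempty))

/-- The partial order on the constructed tests induced by the order on the sets. -/
def liftLe {α : Type*} [DecidableEq α] (U : Finset α) (S : Finset (Finset α))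
    (le : Finset α → Finset α → Prop) :
    Finset (Finset (α × Bool)) → Finset (Finset (α × Bool)) → Prop :=
  fun t₁ t₂ => ∃ X ∈ S, ∃ Y ∈ S, tX U X = t₁ ∧ tX U Y = t₂ ∧ le X Y

/-- Coverage time of an element u in a sequence of sets: the 1-based index of the
first set containing u (or the length of the sequence if none does). -/
def listCovTime {α : Type*} [DecidableEq α] (L : List (Finset α)) (u : α) : ℕ :=
  match L.findIdx? (fun X => decide (u ∈ X)) with
  | some i => i + 1
  | none => L.length

/-- A sequence is precedence-closed: every strict predecessor of an entry occurs
at an earlier position. -/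
def PrecSeq {β : Type*} (S : Finset β) (le : β → β → Prop) (L : List β) : Prop :=
  ∀ (i : ℕ) (hi : i < L.length), ∀ Y ∈ S, le Y (L.get ⟨i, hi⟩) → Y ≠ L.get ⟨i, hi⟩ →
    ∃ j, j < i ∧ ∃ hj : j < L.length, L.get ⟨j, hj⟩ = Y

section AuxLemmas

variable {α : Type*} [DecidableEq α]

lemma mem_tX {U X : Finset α} {R : Finset (α × Bool)} :
    R ∈ tX U X ↔ (∃ u ∈ X, ∃ b : Bool, R = {(u, b)}) ∨
      ((U \ X).Nonempty ∧ R = (U \ X) ×ˢ (Finset.univ : Finset Bool)) := by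
  unfold tX
  simp only [Finset.mem_union, Finset.mem_image, Finset.mem_filter, Finset.mem_singleton]
  constructor
  · rintro (⟨⟨u, b⟩, hp, rfl⟩ | ⟨rfl, hne⟩)
    · exact Or.inl ⟨u, (Finset.mem_product.1 hp).1, b, rfl⟩
    · refine Or.inr ⟨?_, rfl⟩
      obtain ⟨⟨u, b⟩, hp⟩ := hne
      exact ⟨u, (Finset.mem_product.1 hp).1⟩
  · rintro (⟨u, hu, b, rfl⟩ | ⟨hne, rfl⟩)
    · exact Or.inl ⟨(u, b), Finset.mem_product.2 ⟨hu, Finset.mem_univ _⟩, rfl⟩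
    · refine Or.inr ⟨rfl, ?_⟩
      obtain ⟨u, hu⟩ := hne
      exact ⟨(u, true), Finset.mem_product.2 ⟨hu, Finset.mem_univ _⟩⟩

lemma rest_not_singleton {U X : Finset α} {u : α} (hu : u ∈ U \ X) (p : α × Bool) :
    (U \ X) ×ˢ (Finset.univ : Finset Bool) ≠ ({p} : Finset (α × Bool)) := by
  intro h
  have h1 : (u, true) ∈ (U \ X) ×ˢ (Finset.univ : Finset Bool) :=
    Finset.mem_product.2 ⟨hu, Finset.mem_univ _⟩
  have h2 : (u, false) ∈ (U \ X) ×ˢ (Finset.univ : Finset Bool) :=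
    Finset.mem_product.2 ⟨hu, Finset.mem_univ _⟩
  rw [h, Finset.mem_singleton] at h1 h2
  have : (u, true) = ((u, false) : α × Bool) := h1.trans h2.symm
  simp at this

lemma singleton_mem_tX {U X : Finset α} {u : α} {b : Bool} :
    ({(u, b)} : Finset (α × Bool)) ∈ tX U X ↔ u ∈ X := by
  rw [mem_tX]
  constructor
  · rintro (⟨u', hu', b', h⟩ | ⟨hne, h⟩)
    · rw [Finset.singleton_inj] at h
      cases h
      exact hu'
    · exact absurd h.symm (rest_not_singleton hne.choose_spec _)
  · intro hu
    exact Or.inl ⟨u, hu, b, rfl⟩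

lemma tX_inj {U X Y : Finset α} (h : tX U X = tX U Y) : X = Y := by
  ext u
  rw [← singleton_mem_tX (U := U) (b := true), h, singleton_mem_tX]

lemma tX_reply_eq {U X : Finset α} {R : Finset (α × Bool)} {u : α} {b : Bool}
    (hR : R ∈ tX U X) (hu : (u, b) ∈ R) :
    R = if u ∈ X then ({(u, b)} : Finset (α × Bool))
        else (U \ X) ×ˢ (Finset.univ : Finset Bool) := by
  rw [mem_tX] at hR
  rcases hR with ⟨u', hu', b', rfl⟩ | ⟨hne, rfl⟩
  · rw [Finset.mem_singleton] at hu
    cases hu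
    rw [if_pos hu']
  · have h1 : u ∈ U \ X := (Finset.mem_product.1 hu).1
    rw [if_neg (Finset.mem_sdiff.1 h1).2]

lemma tX_reply_mem {U X : Finset α} {u : α} (hu : u ∈ U) (b : Bool) :
    (if u ∈ X then ({(u, b)} : Finset (α × Bool))
      else (U \ X) ×ˢ (Finset.univ : Finset Bool)) ∈ tX U X ∧
    (u, b) ∈ (if u ∈ X then ({(u, b)} : Finset (α × Bool))
      else (U \ X) ×ˢ (Finset.univ : Finset Bool)) := by
  by_cases h : u ∈ X
  · rw [if_pos h]
    exact ⟨singleton_mem_tX.2 h, Finset.mem_singleton_self _⟩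
  · rw [if_neg h]
    have hu' : u ∈ U \ X := Finset.mem_sdiff.2 ⟨hu, h⟩
    exact ⟨mem_tX.2 (Or.inr ⟨⟨u, hu'⟩, rfl⟩),
      Finset.mem_product.2 ⟨hu', Finset.mem_univ _⟩⟩

lemma cost_node_eq {t : Finset (Finset α)} {c : Finset α → DTree α} {h : α}
    {R₀ : Finset α} (h₀ : R₀ ∈ t) (hh : h ∈ R₀)
    (huniq : ∀ R ∈ t, h ∈ R → R = R₀) :
    (DTree.node t c).cost h = 1 + (c R₀).cost h := by
  have hR : ∃ R ∈ t, h ∈ R := ⟨R₀, h₀, hh⟩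
  simp only [DTree.cost, dif_pos hR]
  rw [huniq _ hR.choose_spec.1 hR.choose_spec.2]

lemma listCovTime_cons (X : Finset α) (L : List (Finset α)) (u : α) :
    listCovTime (X :: L) u = if u ∈ X then 1 else listCovTime L u + 1 := by
  unfold listCovTime
  rw [List.findIdx?_cons]
  by_cases h : u ∈ X
  · simp [h]
  · simp only [h, decide_eq_false h, if_neg, Bool.false_eq_true, not_false_iff]
    cases hF : List.findIdx? (fun X => decide (u ∈ X)) L <;> simp [hF, List.length_cons]

lemma prodUniv_inter {V W : Finset α} (hVU : V ⊆ W) (X : Finset α) :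
    ((W \ X) ×ˢ (Finset.univ : Finset Bool)) ∩ (V ×ˢ (Finset.univ : Finset Bool)) =
      (V \ X) ×ˢ (Finset.univ : Finset Bool) := by
  ext ⟨u, b⟩
  simp only [Finset.mem_inter, Finset.mem_product, Finset.mem_sdiff, Finset.mem_univ, and_true]
  constructor
  · rintro ⟨⟨h1, h2⟩, h3⟩
    exact ⟨h3, h2⟩
  · rintro ⟨h1, h2⟩
    exact ⟨⟨hVU h1, h2⟩, h1⟩

end AuxLemmas

section BuildTree

variable {α : Type*} [DecidableEq α]

open scoped Classical in
noncomputable def buildTree (U : Finset α) (d : α × Bool) :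
    List (Finset α) → DTree (α × Bool)
  | [] => .leaf d
  | X :: L => .node (tX U X) (fun R =>
      if h : ∃ p, R = {p} then .leaf h.choose else buildTree U d L)

lemma buildTree_cost (U : Finset α) (d : α × Bool) (L : List (Finset α))
    {u : α} (hu : u ∈ U) (b : Bool) :
    (buildTree U d L).cost (u, b) = listCovTime L u := by
  induction L with
  | nil =>
    simp [buildTree, DTree.cost, listCovTime, List.findIdx?, List.findIdx?.go]
  | cons X L ih =>
    rw [buildTree]
    obtain ⟨hmem, hin⟩ := tX_reply_mem (X := X) hu b
    rw [cost_node_eq hmem hin (fun R hR hu' => tX_reply_eq hR hu'), listCovTime_cons]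
    by_cases hx : u ∈ X
    · rw [if_pos hx, if_pos hx]
      have hex : ∃ p, ({(u, b)} : Finset (α × Bool)) = {p} := ⟨(u, b), rfl⟩
      rw [dif_pos hex]
      simp [DTree.cost]
    · rw [if_neg hx, if_neg hx]
      have hex : ¬ ∃ p, ((U \ X) ×ˢ (Finset.univ : Finset Bool)) = {p} := by
        rintro ⟨p, hp⟩
        exact rest_not_singleton (Finset.mem_sdiff.2 ⟨hu, hx⟩) p hp
      rw [dif_neg hex, ih]
      omega

lemma buildTree_precValid (U : Finset α) (S : Finset (Finset α))
    (le : Finset α → Finset α → Prop) (d : α × Bool)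
    (L : List (Finset α)) (V : Finset α) (P : Finset (Finset (Finset (α × Bool))))
    (hVU : V ⊆ U) (hV : V.Nonempty) (hLS : ∀ X ∈ L, X ∈ S)
    (hcov : ∀ u ∈ V, ∃ X ∈ L, u ∈ X)
    (hprec : ∀ (i : ℕ) (hi : i < L.length), ∀ Y ∈ S, le Y (L.get ⟨i, hi⟩) →
      Y ≠ L.get ⟨i, hi⟩ →
      tX U Y ∈ P ∨ ∃ j, j < i ∧ ∃ hj : j < L.length, L.get ⟨j, hj⟩ = Y) :
    PrecValid (S.image (tX U)) (liftLe U S le) P (V ×ˢ Finset.univ) (buildTree U d L) := by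
  induction L generalizing V P with
  | nil =>
    obtain ⟨u, hu⟩ := hV
    obtain ⟨X, hX, -⟩ := hcov u hu
    exact absurd hX List.not_mem_nil
  | cons X L ih =>
    rw [buildTree]
    refine ⟨Finset.mem_image_of_mem _ (hLS X (List.mem_cons_self)), ?_, ?_⟩
    · rintro t' ht' ⟨X', hX', Y', hY', rfl, hYX, hle⟩ hne
      rw [tX_inj hYX] at hle
      have hX'ne : X' ≠ X := fun h => hne (congrArg (tX U) h)
      rcases hprec 0 (by simp) X' hX' hle hX'ne with h | ⟨j, hj, -⟩
      · exact h
      · omega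
    · rintro R hR hne
      rw [mem_tX] at hR
      rcases hR with ⟨u, hu, b, rfl⟩ | ⟨hrest, rfl⟩
      · have hinV : (u, b) ∈ V ×ˢ (Finset.univ : Finset Bool) := by
          obtain ⟨p, hp⟩ := hne
          rw [Finset.mem_inter, Finset.mem_singleton] at hp
          exact hp.1 ▸ hp.2
        have hex : ∃ p, ({(u, b)} : Finset (α × Bool)) = {p} := ⟨(u, b), rfl⟩
        simp only [dif_pos hex]
        show ({(u, b)} : Finset (α × Bool)) ∩ (V ×ˢ Finset.univ) = {hex.choose}
        rw [Finset.inter_eq_left.2 (Finset.singleton_subset_iff.2 hinV)]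
        exact hex.choose_spec
      · have hex : ¬ ∃ p, ((U \ X) ×ˢ (Finset.univ : Finset Bool)) = {p} := by
          rintro ⟨p, hp⟩
          exact rest_not_singleton hrest.choose_spec p hp
        simp only [dif_neg hex] 
        rw [prodUniv_inter hVU] at hne ⊢
        have hVX : (V \ X).Nonempty := by
          obtain ⟨⟨u, b⟩, hp⟩ := hne
          exact ⟨u, (Finset.mem_product.1 hp).1⟩
        refine ih (V \ X) (insert (tX U X) P)
          (fun u hu => hVU (Finset.mem_sdiff.1 hu).1) hVX
          (fun Y hY => hLS Y (List.mem_cons_of_mem _ hY)) ?_ ?_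
        · intro u hu
          rw [Finset.mem_sdiff] at hu
          obtain ⟨X', hX', hu'⟩ := hcov u hu.1
          rcases List.mem_cons.1 hX' with rfl | h
          · exact absurd hu' hu.2
          · exact ⟨X', h, hu'⟩
        · intro i hi Y hY hle hne'
          have hi' : i + 1 < (X :: L).length := by simpa using Nat.succ_lt_succ hi
          rcases hprec (i + 1) hi' Y hY hle hne' with h | ⟨j, hj, hj2, hjeq⟩
          · exact Or.inl (Finset.mem_insert_of_mem h)
          · cases j with
            | zero =>
              refine Or.inl ?_
              have : X = Y := hjeq
              rw [← this]
              exact Finset.mem_insert_self _ _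
            | succ j =>
              exact Or.inr ⟨j, by omega, ⟨by simpa using Nat.lt_of_succ_lt_succ hj2, hjeq⟩⟩

lemma buildTree_costA (U : Finset α) (d : α × Bool) (L : List (Finset α)) :
    costA (U ×ˢ (Finset.univ : Finset Bool)) (buildTree U d L) =
      2 * ∑ u ∈ U, listCovTime L u := by
  unfold costA
  rw [Finset.sum_product, Finset.mul_sum]
  refine Finset.sum_congr rfl fun u hu => ?_
  rw [Finset.sum_congr rfl (fun b _ => buildTree_cost U d L hu b)]
  simp [two_mul]

end BuildTree

section Extract

variable {α : Type*} [DecidableEq α]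

lemma extract_list (U : Finset α) (S : Finset (Finset α))
    (le : Finset α → Finset α → Prop) (hsub : ∀ X ∈ S, X ⊆ U)
    (D : DTree (α × Bool)) :
    ∀ (V : Finset α) (M : List (Finset α)),
      V ⊆ U → V.Nonempty → M.Nodup → (∀ Y ∈ M, Y ⊆ U) → (∀ Y ∈ M, Y ∩ V = ∅) →
      PrecValid (S.image (tX U)) (liftLe U S le) ((M.map (tX U)).toFinset)
        (V ×ˢ Finset.univ) D →
      ∃ L : List (Finset α),
        (∀ X ∈ L, X ∈ S) ∧ (M ++ L).Nodup ∧
        (∀ u ∈ V, ∃ X ∈ L, u ∈ X) ∧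
        (∀ u ∈ V, ∀ b : Bool, listCovTime L u ≤ D.cost (u, b)) ∧
        (∀ (i : ℕ) (hi : i < L.length), ∀ Y ∈ S, le Y (L.get ⟨i, hi⟩) →
          Y ≠ L.get ⟨i, hi⟩ →
          Y ∈ M ∨ ∃ j, j < i ∧ ∃ hj : j < L.length, L.get ⟨j, hj⟩ = Y) := by
  induction D with
  | leaf h =>
    intro V M hVU hV _ _ _ hPV
    exfalso
    have hcard := congrArg Finset.card (show V ×ˢ (Finset.univ : Finset Bool) = {h} from hPV)
    rw [Finset.card_product, Finset.card_singleton] at hcard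
    simp only [Finset.card_univ, Fintype.card_bool] at hcard
    obtain ⟨u, hu⟩ := hV
    have := Finset.card_pos.2 ⟨u, hu⟩
    omega
  | node t c ih =>
    intro V M hVU hV hMnd hMU hMV hPV
    obtain ⟨ht, hpred, hchild⟩ := hPV
    obtain ⟨X, hXS, rfl⟩ := Finset.mem_image.1 ht
    -- the key fact about predecessors at this node
    have hpredX : ∀ Y ∈ S, le Y X → Y ≠ X → Y ∈ M := by
      intro Y hY hle hne
      have hne' : tX U Y ≠ tX U X := fun h => hne (tX_inj h)
      have := hpred (tX U Y) (Finset.mem_image_of_mem _ hY)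
        ⟨Y, hY, X, hXS, rfl, rfl, hle⟩ hne'
      rw [List.mem_toFinset] at this
      obtain ⟨Z, hZ, hZeq⟩ := List.mem_map.1 this
      rwa [← tX_inj hZeq]
    by_cases hXM : X ∈ M
    · -- repeated test: X ∩ V = ∅
      have hXV : X ∩ V = ∅ := hMV X hXM
      have hVX : V \ X = V := by
        rw [Finset.sdiff_eq_self_iff_disjoint, Finset.disjoint_left]
        intro u hu hu'
        exact Finset.notMem_empty u (hXV ▸ Finset.mem_inter.2 ⟨hu', hu⟩)
      have hUX : (U \ X).Nonempty := by
        obtain ⟨u, hu⟩ := hV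
        refine ⟨u, Finset.mem_sdiff.2 ⟨hVU hu, fun h => ?_⟩⟩
        exact Finset.notMem_empty u (hXV ▸ Finset.mem_inter.2 ⟨h, hu⟩)
      have hrestmem : (U \ X) ×ˢ (Finset.univ : Finset Bool) ∈ tX U X :=
        mem_tX.2 (Or.inr ⟨hUX, rfl⟩)
      have hcap : ((U \ X) ×ˢ (Finset.univ : Finset Bool)) ∩ (V ×ˢ Finset.univ) =
          V ×ˢ (Finset.univ : Finset Bool) := by
        rw [prodUniv_inter hVU, hVX]
      have hchne : (((U \ X) ×ˢ (Finset.univ : Finset Bool)) ∩ (V ×ˢ Finset.univ)).Nonempty := by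
        rw [hcap]
        obtain ⟨u, hu⟩ := hV
        exact ⟨(u, true), Finset.mem_product.2 ⟨hu, Finset.mem_univ _⟩⟩
      have hch := hchild _ hrestmem hchne
      rw [hcap, Finset.insert_eq_self.2 (by
        rw [List.mem_toFinset]; exact List.mem_map.2 ⟨X, hXM, rfl⟩)] at hch
      obtain ⟨L, hLS, hLnd, hLcov, hLcost, hLpr⟩ :=
        ih _ V M hVU hV hMnd hMU hMV hch
      refine ⟨L, hLS, hLnd, hLcov, ?_, hLpr⟩
      intro u hu b
      have hxu : u ∉ X := fun h =>
        Finset.notMem_empty u (hXV ▸ Finset.mem_inter.2 ⟨h, hu⟩)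
      obtain ⟨hmem, hin⟩ := tX_reply_mem (X := X) (hVU hu) b
      rw [cost_node_eq hmem hin (fun R hR hu' => tX_reply_eq hR hu')]
      simp only [if_neg hxu]
      have := hLcost u hu b
      omega
    · by_cases hVXe : (V \ X).Nonempty
      · -- recurse into the rest child with M ++ [X]
        have hUX : (U \ X).Nonempty := by
          obtain ⟨u, hu⟩ := hVXe
          rw [Finset.mem_sdiff] at hu
          exact ⟨u, Finset.mem_sdiff.2 ⟨hVU hu.1, hu.2⟩⟩
        have hrestmem : (U \ X) ×ˢ (Finset.univ : Finset Bool) ∈ tX U X :=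
          mem_tX.2 (Or.inr ⟨hUX, rfl⟩)
        have hcap : ((U \ X) ×ˢ (Finset.univ : Finset Bool)) ∩ (V ×ˢ Finset.univ) =
            (V \ X) ×ˢ (Finset.univ : Finset Bool) := prodUniv_inter hVU X
        have hchne : (((U \ X) ×ˢ (Finset.univ : Finset Bool)) ∩ (V ×ˢ Finset.univ)).Nonempty := by
          rw [hcap]
          obtain ⟨u, hu⟩ := hVXe
          exact ⟨(u, true), Finset.mem_product.2 ⟨hu, Finset.mem_univ _⟩⟩
        have hch := hchild _ hrestmem hchne
        rw [hcap] at hch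
        have hPeq : insert (tX U X) ((M.map (tX U)).toFinset) =
            (((M ++ [X]).map (tX U)).toFinset) := by
          rw [List.map_append, List.toFinset_append]
          ext; simp [or_comm]
        rw [hPeq] at hch
        obtain ⟨L', hLS, hLnd, hLcov, hLcost, hLpr⟩ :=
          ih _ (V \ X) (M ++ [X])
            (fun u hu => hVU (Finset.mem_sdiff.1 hu).1) hVXe
            (by
              rw [List.nodup_append]
              refine ⟨hMnd, List.nodup_singleton X, ?_⟩
              intro a ha b hb
              rw [List.mem_singleton] at hb
              intro hab; subst hb; subst hab; exact hXM ha)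
            (by
              intro Y hY
              rcases List.mem_append.1 hY with h | h
              · exact hMU Y h
              · rw [List.mem_singleton.1 h]; exact hsub X hXS)
            (by
              intro Y hY
              rcases List.mem_append.1 hY with h | h
              · have := hMV Y h
                rw [Finset.eq_empty_iff_forall_notMem] at this ⊢
                intro u hu
                rw [Finset.mem_inter, Finset.mem_sdiff] at hu
                exact this u (Finset.mem_inter.2 ⟨hu.1, hu.2.1⟩)
              · rw [List.mem_singleton.1 h]
                rw [Finset.eq_empty_iff_forall_notMem]
                intro u hu
                rw [Finset.mem_inter, Finset.mem_sdiff] at hu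
                exact hu.2.2 hu.1)
            hch
        refine ⟨X :: L', fun Z hZ => ?_, ?_, ?_, ?_, ?_⟩
        · rcases List.mem_cons.1 hZ with rfl | h
          · exact hXS
          · exact hLS Z h
        · have : M ++ X :: L' = (M ++ [X]) ++ L' := by simp
          rw [this]
          exact hLnd
        · intro u hu
          by_cases hx : u ∈ X
          · exact ⟨X, List.mem_cons_self, hx⟩
          · obtain ⟨Z, hZ, hz⟩ := hLcov u (Finset.mem_sdiff.2 ⟨hu, hx⟩)
            exact ⟨Z, List.mem_cons_of_mem _ hZ, hz⟩
        · intro u hu b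
          obtain ⟨hmem, hin⟩ := tX_reply_mem (X := X) (hVU hu) b
          rw [cost_node_eq hmem hin (fun R hR hu' => tX_reply_eq hR hu'), listCovTime_cons]
          by_cases hx : u ∈ X
          · rw [if_pos hx]
            omega
          · simp only [if_neg hx]
            have := hLcost u (Finset.mem_sdiff.2 ⟨hu, hx⟩) b
            omega
        · intro i hi Y hY hle hne
          cases i with
          | zero =>
            exact Or.inl (hpredX Y hY hle hne)
          | succ i =>
            have hi' : i < L'.length := by simpa using Nat.lt_of_succ_lt_succ hi
            rcases hLpr i hi' Y hY hle hne with h | ⟨j, hj, hj2, hjeq⟩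
            · rcases List.mem_append.1 h with h' | h'
              · exact Or.inl h'
              · refine Or.inr ⟨0, by omega, by simp, ?_⟩
                exact (List.mem_singleton.1 h').symm
            · exact Or.inr ⟨j + 1, by omega, by simpa using Nat.succ_lt_succ hj2, hjeq⟩
      · -- V ⊆ X : take L = [X]
        refine ⟨[X], by simpa using hXS, ?_, ?_, ?_, ?_⟩
        · exact List.Nodup.append hMnd (List.nodup_singleton X)
            (fun a ha hb => hXM ((List.mem_singleton.1 hb) ▸ ha))
        · intro u hu
          refine ⟨X, List.mem_singleton_self X, ?_⟩
          by_contra hx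
          exact hVXe ⟨u, Finset.mem_sdiff.2 ⟨hu, hx⟩⟩
        · intro u hu b
          have hx : u ∈ X := by
            by_contra hx
            exact hVXe ⟨u, Finset.mem_sdiff.2 ⟨hu, hx⟩⟩
          obtain ⟨hmem, hin⟩ := tX_reply_mem (X := X) (hVU hu) b
          rw [cost_node_eq hmem hin (fun R hR hu' => tX_reply_eq hR hu'), listCovTime_cons,
            if_pos hx]
          omega
        · intro i hi Y hY hle hne
          cases i with
          | zero => exact Or.inl (hpredX Y hY hle hne)
          | succ i => simp at hi

lemma exists_linext (S : Finset (Finset α)) (le : Finset α → Finset α → Prop)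
    (hrefl : ∀ X ∈ S, le X X)
    (htrans : ∀ X ∈ S, ∀ Y ∈ S, ∀ Z ∈ S, le X Y → le Y Z → le X Z)
    (hanti : ∀ X ∈ S, ∀ Y ∈ S, le X Y → le Y X → X = Y) :
    ∀ (n : ℕ) (S' : Finset (Finset α)), S'.card = n → S' ⊆ S →
      ∃ L : List (Finset α), L.Nodup ∧ L.toFinset = S' ∧
        (∀ (i : ℕ) (hi : i < L.length), ∀ Y ∈ S', le Y (L.get ⟨i, hi⟩) →
          Y ≠ L.get ⟨i, hi⟩ →
          ∃ j, j < i ∧ ∃ hj : j < L.length, L.get ⟨j, hj⟩ = Y) := by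
  intro n
  induction n with
  | zero =>
    intro S' hcard hS'
    refine ⟨[], by simp, ?_, by intro i hi; simp at hi⟩
    simp [Finset.card_eq_zero.1 hcard]
  | succ n ihn =>
    intro S' hcard hS'
    classical
    have hne : S'.Nonempty := by
      rw [← Finset.card_pos, hcard]; omega
    obtain ⟨m, hm, hmin⟩ := Finset.exists_min_image S'
      (fun m => (S'.filter (fun Z => le Z m)).card) hne
    have hminimal : ∀ Z ∈ S', le Z m → Z = m := by
      intro Z hZ hle
      by_contra hne'
      have hss : S'.filter (fun W => le W Z) ⊂ S'.filter (fun W => le W m) := by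
        constructor
        · intro W hW
          rw [Finset.mem_filter] at hW ⊢
          exact ⟨hW.1, htrans W (hS' hW.1) Z (hS' hZ) m (hS' hm) hW.2 hle⟩
        · intro hsup
          have hmm : m ∈ S'.filter (fun W => le W m) :=
            Finset.mem_filter.2 ⟨hm, hrefl m (hS' hm)⟩
          have := Finset.mem_filter.1 (hsup hmm)
          exact hne' (hanti Z (hS' hZ) m (hS' hm) hle this.2)
      have h1 := Finset.card_lt_card hss
      have h2 := hmin Z hZ
      omega
    obtain ⟨L', hnd, htf, hpr⟩ := ihn (S'.erase m)
      (by rw [Finset.card_erase_of_mem hm, hcard]; rfl)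
      (fun W hW => hS' (Finset.mem_of_mem_erase hW))
    refine ⟨m :: L', ?_, ?_, ?_⟩
    · rw [List.nodup_cons]
      refine ⟨fun h => ?_, hnd⟩
      have : m ∈ S'.erase m := htf ▸ List.mem_toFinset.2 h
      exact (Finset.mem_erase.1 this).1 rfl
    · rw [List.toFinset_cons, htf, Finset.insert_erase hm]
    · intro i hi Y hY hle hne'
      cases i with
      | zero =>
        exact absurd (hminimal Y hY hle) hne'
      | succ i =>
        by_cases hYm : Y = m
        · exact ⟨0, by omega, by simp, hYm.symm⟩
        · have hY' : Y ∈ S'.erase m := Finset.mem_erase.2 ⟨hYm, hY⟩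
          obtain ⟨j, hj, hj2, hjeq⟩ :=
            hpr i (by simpa using Nat.lt_of_succ_lt_succ hi) Y hY' hle hne'
          exact ⟨j + 1, by omega, by simpa using Nat.succ_lt_succ hj2, hjeq⟩

end Extract

/-- the optimal average-case cost of a precedence-closed decision tree
for the constructed instance equals exactly twice the optimal value of Precedence
Constrained Min-Sum Set Cover (with f = 1). -/
theorem stmt18 {α : Type*} [DecidableEq α]
    (U : Finset α) (hU : U.Nonempty)
    (S : Finset (Finset α)) (hsub : ∀ X ∈ S, X ⊆ U) (hcov : S.sup id = U)
    (le : Finset α → Finset α → Prop)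
    (hrefl : ∀ X ∈ S, le X X)
    (htrans : ∀ X ∈ S, ∀ Y ∈ S, ∀ Z ∈ S, le X Y → le Y Z → le X Z)
    (hanti : ∀ X ∈ S, ∀ Y ∈ S, le X Y → le Y X → X = Y) :
    sInf {c : ℕ | ∃ D : DTree (α × Bool),
        PrecValid (S.image (tX U)) (liftLe U S le) ∅
          (U ×ˢ (Finset.univ : Finset Bool)) D ∧
        costA (U ×ˢ (Finset.univ : Finset Bool)) D = c} =
      2 * sInf {c : ℕ | ∃ L : List (Finset α),
        (∀ X ∈ L, X ∈ S) ∧ L.Nodup ∧ PrecSeq S le L ∧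
        (∀ u ∈ U, ∃ X ∈ L, u ∈ X) ∧ (∑ u ∈ U, listCovTime L u) = c} := by
    classical
  obtain ⟨L₀, hnd₀, htf₀, hpr₀⟩ :=
    exists_linext S le hrefl htrans hanti S.card S rfl Finset.Subset.rfl
  have hL₀S : ∀ X ∈ L₀, X ∈ S := fun X hX => htf₀ ▸ List.mem_toFinset.2 hX
  have hcov₀ : ∀ u ∈ U, ∃ X ∈ L₀, u ∈ X := by
    intro u hu
    rw [← hcov] at hu
    obtain ⟨X, hXS, hX⟩ := Finset.mem_sup.1 hu
    exact ⟨X, List.mem_toFinset.1 (htf₀.symm ▸ hXS), hX⟩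
  set A := {c : ℕ | ∃ D : DTree (α × Bool),
      PrecValid (S.image (tX U)) (liftLe U S le) ∅
        (U ×ˢ (Finset.univ : Finset Bool)) D ∧
      costA (U ×ˢ (Finset.univ : Finset Bool)) D = c} with hAdef
  set B := {c : ℕ | ∃ L : List (Finset α),
      (∀ X ∈ L, X ∈ S) ∧ L.Nodup ∧ PrecSeq S le L ∧
      (∀ u ∈ U, ∃ X ∈ L, u ∈ X) ∧ (∑ u ∈ U, listCovTime L u) = c} with hBdef
  have hBmem : (∑ u ∈ U, listCovTime L₀ u) ∈ B :=
    ⟨L₀, hL₀S, hnd₀, hpr₀, hcov₀, rfl⟩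
  have hBne : B.Nonempty := ⟨_, hBmem⟩
  obtain ⟨L, hLS, hLnd, hLpr, hLcov, hLsum⟩ := Nat.sInf_mem hBne
  obtain ⟨u₀, hu₀⟩ := hU
  set d : α × Bool := (u₀, true) with hd
  have hDpv := buildTree_precValid U S le d L U ∅ Finset.Subset.rfl ⟨u₀, hu₀⟩ hLS hLcov
    (fun i hi Y hY h1 h2 => Or.inr (hLpr i hi Y hY h1 h2))
  have h1 : sInf A ≤ 2 * sInf B :=
    Nat.sInf_le ⟨buildTree U d L, hDpv, by rw [buildTree_costA, hLsum]⟩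
  have hAne : A.Nonempty := ⟨_, buildTree U d L, hDpv, rfl⟩
  obtain ⟨D, hDpv', hDc⟩ := Nat.sInf_mem hAne
  obtain ⟨L', hL'S, hL'nd, hL'cov, hL'cost, hL'pr⟩ :=
    extract_list U S le hsub D U [] Finset.Subset.rfl ⟨u₀, hu₀⟩ (by simp) (by simp) (by simp)
      (by simpa using hDpv')
  have hBmem' : (∑ u ∈ U, listCovTime L' u) ∈ B :=
    ⟨L', hL'S, by simpa using hL'nd,
      fun i hi Y hY h1 h2 => ((hL'pr i hi Y hY h1 h2).resolve_left List.not_mem_nil),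
      hL'cov, rfl⟩
  have h2 : 2 * (∑ u ∈ U, listCovTime L' u) ≤ sInf A := by
    rw [← hDc]
    unfold costA
    rw [Finset.sum_product, Finset.mul_sum]
    refine Finset.sum_le_sum fun u hu => ?_
    have hb : ∑ b ∈ (Finset.univ : Finset Bool), D.cost (u, b) =
        D.cost (u, true) + D.cost (u, false) := by
      rw [Fintype.sum_bool]
    rw [hb, two_mul]
    exact Nat.add_le_add (hL'cost u hu true) (hL'cost u hu false)
  have h3 : 2 * sInf B ≤ sInf A :=
    le_trans (Nat.mul_le_mul_left 2 (Nat.sInf_le hBmem')) h2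
  exact le_antisymm h1 h3
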